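/- Let γ(x) = (C·x, y(x)) on [0,1] with C > 0 and y ∈ C¹, and let (pₙ, qₙ): [0,1] → ℕ × ℕ* be a uniform rational approximation. Then sup_{x∈[0,1]} | y'(x) − (qₙ(x)+1)! · S_{pₙ(x), qₙ(x)−pₙ(x)} / C^{qₙ(x)} | → 0 as n → ∞. -/

import Mathlib

set_option maxHeartbeats 1000000

lemma cont_kernel (k l : ℕ) : Continuous fun s : ℝ => s ^ k * (1 - s) ^ l := by fun_prop

lemma beta_int : ∀ (l k : ℕ), (∫ s in (0:ℝ)..1, s ^ k * (1 - s) ^ l)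
    = (k.factorial * l.factorial : ℝ) / (k + l + 1).factorial := by
  intro l
  induction l with
  | zero =>
    intro k
    simp only [pow_zero, mul_one, integral_pow, Nat.factorial]
    have h2 : (0:ℝ) < k.factorial := by exact_mod_cast k.factorial_pos
    push_cast
    field_simp
    simp
  | succ l ih =>
    intro k
    have hsplit : (∫ s in (0:ℝ)..1, s ^ k * (1 - s) ^ (l+1))
        = (∫ s in (0:ℝ)..1, s ^ k * (1 - s) ^ l) - ∫ s in (0:ℝ)..1, s ^ (k+1) * (1 - s) ^ l := by
      rw [← intervalIntegral.integral_sub ((cont_kernel k l).intervalIntegrable 0 1)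
        ((cont_kernel (k+1) l).intervalIntegrable 0 1)]
      apply intervalIntegral.integral_congr
      intro s _; ring
    rw [hsplit, ih k, ih (k+1)]
    have e1 : k + (l+1) + 1 = (k + l + 1) + 1 := by omega
    have e2 : (k+1) + l + 1 = (k + l + 1) + 1 := by omega
    rw [e1, e2, Nat.factorial_succ (k+l+1), Nat.factorial_succ l, Nat.factorial_succ k]
    have h1 : (0:ℝ) < (k+l+1).factorial := by exact_mod_cast (k+l+1).factorial_pos
    have h2 : (0:ℝ) < k.factorial := by exact_mod_cast k.factorial_pos
    have h3 : (0:ℝ) < l.factorial := by exact_mod_cast l.factorial_pos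
    push_cast
    field_simp
    ring

lemma key_ineq (K m x d η : ℝ) (hK0 : 0 ≤ K) (hKm : K ≤ m) (hm : 0 < m)
    (h1 : 1/m ≤ η/2) (h2 : 1/m ≤ d) (hd : 0 < d) (h4 : 4*d^2 ≤ η/2)
    (hx : |K/m - x| ≤ d) :
    (K+1)*(K+2)/((m+2)*(m+3)) - 2*x*((K+1)/(m+2)) + x^2 ≤ η := by
  have hm2 : (0:ℝ) < m + 2 := by linarith
  have hm3 : (0:ℝ) < m + 3 := by linarith
  set a := (K+1)/(m+2) with ha
  have hVid : (K+1)*(K+2)/((m+2)*(m+3)) - 2*x*((K+1)/(m+2)) + x^2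
      = (K+1)*(m-K+1)/((m+2)^2*(m+3)) + (a - x)^2 := by
    rw [ha]; field_simp; ring
  rw [hVid]
  have hV : (K+1)*(m-K+1)/((m+2)^2*(m+3)) ≤ 1/m := by
    rw [div_le_div_iff₀ (by positivity) hm]
    nlinarith [sq_nonneg (K - (m - K)), sq_nonneg (m+2)]
  have hak : |a - K/m| ≤ 1/m := by
    have hid : a - K/m = (m - 2*K)/(m*(m+2)) := by rw [ha]; field_simp; ring
    rw [hid, abs_div, abs_of_pos (show (0:ℝ) < m*(m+2) by positivity)]
    calc |m - 2*K| / (m*(m+2)) ≤ m / (m*(m+2)) := by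
          gcongr
          exact abs_le.mpr ⟨by linarith, by linarith⟩
      _ ≤ 1/m := by rw [div_le_div_iff₀ (by positivity) hm]; nlinarith
  have hax : |a - x| ≤ 1/m + d := by
    calc |a - x| ≤ |a - K/m| + |K/m - x| := abs_sub_le a (K/m) x
      _ ≤ 1/m + d := add_le_add hak hx
  have hsq : (a - x)^2 ≤ (1/m + d)^2 := by
    rw [← sq_abs (a - x)]
    apply pow_le_pow_left₀ (abs_nonneg _) hax
  have : (1/m + d)^2 ≤ 4*d^2 := by nlinarith [mul_nonneg (sub_nonneg.mpr h2) (by positivity : (0:ℝ) ≤ d + 1/m), one_div_pos.mpr hm]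
  linarith


theorem stmt_11 (C : ℝ) (hC : 0 < C) (y y' : ℝ → ℝ)
    (hy : ∀ s ∈ Set.Icc (0:ℝ) 1, HasDerivAt y (y' s) s)
    (hy' : ContinuousOn y' (Set.Icc (0:ℝ) 1))
    (S : ℕ → ℕ → ℝ)
    (hS : ∀ k l, S k l = C ^ (k + l) *
      ∫ s in (0:ℝ)..1, s ^ k * (1 - s) ^ l / (k.factorial * l.factorial) * y' s)
    (p q : ℕ → ℝ → ℕ)
    (hq : ∀ n, ∀ x ∈ Set.Icc (0:ℝ) 1, 0 < q n x)
    (hpq : ∀ n, ∀ x ∈ Set.Icc (0:ℝ) 1, (p n x : ℝ) / (q n x : ℝ) ∈ Set.Icc (0:ℝ) 1)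
    (hqinf : ∀ M : ℕ, ∃ N : ℕ, ∀ n ≥ N, ∀ x ∈ Set.Icc (0:ℝ) 1, M ≤ q n x)
    (hunif : ∀ ε > (0:ℝ), ∃ N : ℕ, ∀ n ≥ N, ∀ x ∈ Set.Icc (0:ℝ) 1,
        |(p n x : ℝ) / (q n x : ℝ) - x| < ε) :
    ∀ ε > (0:ℝ), ∃ N : ℕ, ∀ n ≥ N, ∀ x ∈ Set.Icc (0:ℝ) 1,
      |y' x - ((q n x + 1).factorial : ℝ) * S (p n x) (q n x - p n x) / C ^ (q n x)| < ε := by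
  intro ε hε
  -- a bound for |y'| on [0,1]
  obtain ⟨M₀, hM₀⟩ := isCompact_Icc.exists_bound_of_continuousOn hy'
  set M : ℝ := |M₀| + 1 with hMdef
  have hMpos : 0 < M := by positivity
  have hM : ∀ s ∈ Set.Icc (0:ℝ) 1, |y' s| ≤ M := by
    intro s hs
    have h := hM₀ s hs
    rw [Real.norm_eq_abs] at h
    calc |y' s| ≤ M₀ := h
      _ ≤ |M₀| + 1 := by linarith [le_abs_self M₀]
  -- uniform continuity of y'
  have huc := isCompact_Icc.uniformContinuousOn_of_continuous hy'
  rw [Metric.uniformContinuousOn_iff] at huc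
  obtain ⟨δ, hδ, hδc⟩ := huc (ε/4) (by linarith)
  -- constants
  set c : ℝ := 2*M/δ^2 with hcdef
  have hc : 0 < c := by positivity
  set η : ℝ := ε/4/c with hηdef
  have hη : 0 < η := by positivity
  set d : ℝ := Real.sqrt (η/8) with hddef
  have hd : 0 < d := Real.sqrt_pos.mpr (by positivity)
  have hd2 : 4*d^2 = η/2 := by
    rw [hddef, sq, Real.mul_self_sqrt (by positivity)]; ring
  obtain ⟨m₀, hm₀⟩ := exists_nat_gt (max (2/η) (1/d))
  obtain ⟨N₁, hN₁⟩ := hqinf m₀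
  obtain ⟨N₂, hN₂⟩ := hunif d hd
  refine ⟨max N₁ N₂, fun n hn x hx => ?_⟩
  -- per-point setup
  set k : ℕ := p n x with hkdef
  set m : ℕ := q n x with hmdef
  have hqpos : 0 < m := hq n x hx
  have hmR : (0:ℝ) < m := by exact_mod_cast hqpos
  have hkm : k ≤ m := by
    have h := (hpq n x hx).2
    rw [div_le_one hmR] at h
    exact_mod_cast h
  set l : ℕ := m - k with hldef
  have hkl : k + l = m := Nat.add_sub_cancel' hkm
  have hklR : (l:ℝ) = (m:ℝ) - k := by rw [hldef]; push_cast [hkm]; ring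
  have hmge : m₀ ≤ m := hN₁ n (le_trans (le_max_left _ _) hn) x hx
  have hpx : |(k:ℝ)/m - x| < d := hN₂ n (le_trans (le_max_right _ _) hn) x hx
  have hmbig : max (2/η) (1/d) < (m:ℝ) := lt_of_lt_of_le hm₀ (by exact_mod_cast hmge)
  have h2η : 1/(m:ℝ) ≤ η/2 := by
    have h := lt_of_le_of_lt (le_max_left (2/η) (1/d)) hmbig
    rw [div_lt_iff₀ hη] at h
    rw [div_le_div_iff₀ hmR (by norm_num : (0:ℝ) < 2)]
    nlinarith
  have h1d : 1/(m:ℝ) ≤ d := by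
    have h := lt_of_le_of_lt (le_max_right (2/η) (1/d)) hmbig
    rw [div_lt_iff₀ hd] at h
    rw [div_le_iff₀ hmR]
    nlinarith
  -- factorial positivity
  have hfk : (0:ℝ) < k.factorial := by exact_mod_cast k.factorial_pos
  have hfl : (0:ℝ) < l.factorial := by exact_mod_cast l.factorial_pos
  have hfm1 : (0:ℝ) < (m+1).factorial := by exact_mod_cast (m+1).factorial_pos
  have hCm : (C:ℝ)^m ≠ 0 := pow_ne_zero _ hC.ne'
  -- the quantity equals D * J
  set D : ℝ := ((m+1).factorial : ℝ)/((k.factorial : ℝ) * l.factorial) with hDdef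
  have hD : 0 < D := by positivity
  set J : ℝ := ∫ s in (0:ℝ)..1, s ^ k * (1 - s) ^ l * y' s with hJdef
  have hEeq : ((m + 1).factorial : ℝ) * S k l / C ^ m = D * J := by
    rw [hS k l, hkl]
    have hcongr : (∫ s in (0:ℝ)..1, s ^ k * (1 - s) ^ l / (k.factorial * l.factorial) * y' s)
        = ∫ s in (0:ℝ)..1, (s ^ k * (1 - s) ^ l * y' s) * ((k.factorial : ℝ) * l.factorial)⁻¹ := by
      apply intervalIntegral.integral_congr
      intro s _; ring
    rw [hcongr, intervalIntegral.integral_mul_const, ← hJdef, hDdef]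
    field_simp
  -- integral evaluations
  have I0 : (∫ s in (0:ℝ)..1, s ^ k * (1 - s) ^ l)
      = (k.factorial * l.factorial : ℝ) / (m+1).factorial := by
    rw [beta_int l k, hkl]
  have e1 : (k+1) + l + 1 = m + 2 := by omega
  have e2 : (k+2) + l + 1 = m + 3 := by omega
  have I1 : (∫ s in (0:ℝ)..1, s ^ (k+1) * (1 - s) ^ l)
      = ((k+1).factorial * l.factorial : ℝ) / (m+2).factorial := by
    rw [beta_int l (k+1), e1]
  have I2 : (∫ s in (0:ℝ)..1, s ^ (k+2) * (1 - s) ^ l)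
      = ((k+2).factorial * l.factorial : ℝ) / (m+3).factorial := by
    rw [beta_int l (k+2), e2]
  -- second moment integral
  have hE2 : (∫ s in (0:ℝ)..1, s ^ k * (1 - s) ^ l * (s - x)^2)
      = ((k+2).factorial * l.factorial : ℝ) / (m+3).factorial
        - 2*x*(((k+1).factorial * l.factorial : ℝ) / (m+2).factorial)
        + x^2*((k.factorial * l.factorial : ℝ) / (m+1).factorial) := by
    rw [← I0, ← I1, ← I2, ← intervalIntegral.integral_const_mul,
      ← intervalIntegral.integral_const_mul,
      ← intervalIntegral.integral_sub ((cont_kernel (k+2) l).intervalIntegrable 0 1)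
        ((by fun_prop : Continuous fun s : ℝ => 2*x*(s^(k+1)*(1-s)^l)).intervalIntegrable 0 1),
      ← intervalIntegral.integral_add
        (((cont_kernel (k+2) l).intervalIntegrable 0 1).sub
          ((by fun_prop : Continuous fun s : ℝ => 2*x*(s^(k+1)*(1-s)^l)).intervalIntegrable 0 1))
        ((by fun_prop : Continuous fun s : ℝ => x^2*(s^k*(1-s)^l)).intervalIntegrable 0 1)]
    apply intervalIntegral.integral_congr
    intro s _; ring
  -- pointwise bound
  have hpt : ∀ s ∈ Set.Icc (0:ℝ) 1, |y' s - y' x| ≤ ε/4 + c*(s-x)^2 := by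
    intro s hs
    by_cases hcase : dist s x < δ
    · have h := le_of_lt (hδc s hs x hx hcase)
      rw [Real.dist_eq] at h
      have : (0:ℝ) ≤ c*(s-x)^2 := by positivity
      linarith
    · push_neg at hcase
      rw [Real.dist_eq] at hcase
      have h1 : |y' s - y' x| ≤ 2*M := by
        calc |y' s - y' x| ≤ |y' s| + |y' x| := abs_sub _ _
          _ ≤ 2*M := by linarith [hM s hs, hM x hx]
      have hsq : δ^2 ≤ (s-x)^2 := by
        rw [← sq_abs (s-x)]
        exact pow_le_pow_left₀ hδ.le hcase 2
      have hcd : c*δ^2 = 2*M := by rw [hcdef]; field_simp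
      nlinarith
  -- integrability of the error integrand
  have hyInt : IntervalIntegrable (fun s => s ^ k * (1 - s) ^ l * (y' x - y' s)) MeasureTheory.volume 0 1 := by
    apply ContinuousOn.intervalIntegrable
    rw [Set.uIcc_of_le (by norm_num : (0:ℝ) ≤ 1)]
    exact ((cont_kernel k l).continuousOn).mul (continuousOn_const.sub hy')
  -- key bound
  have hker : ∀ s ∈ Set.Icc (0:ℝ) 1, (0:ℝ) ≤ s ^ k * (1 - s) ^ l := by
    intro s hs
    exact mul_nonneg (pow_nonneg hs.1 _) (pow_nonneg (by linarith [hs.2]) _)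
  have hmain : |y' x - D * J| ≤ ε/4 + c * (D * ((∫ s in (0:ℝ)..1, s ^ k * (1 - s) ^ l * (s - x)^2))) := by
    have hsplit : y' x - D * J = D * ∫ s in (0:ℝ)..1, s ^ k * (1 - s) ^ l * (y' x - y' s) := by
      have : (∫ s in (0:ℝ)..1, s ^ k * (1 - s) ^ l * (y' x - y' s))
          = (∫ s in (0:ℝ)..1, s ^ k * (1 - s) ^ l * y' x) - J := by
        rw [hJdef, ← intervalIntegral.integral_sub]
        · apply intervalIntegral.integral_congr; intro s _; ring
        · exact ((cont_kernel k l).mul continuous_const).intervalIntegrable 0 1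
        · apply ContinuousOn.intervalIntegrable
          rw [Set.uIcc_of_le (by norm_num : (0:ℝ) ≤ 1)]
          exact ((cont_kernel k l).continuousOn).mul hy'
      rw [this, intervalIntegral.integral_mul_const, I0, mul_sub, ← mul_assoc]
      rw [hDdef]
      field_simp
    rw [hsplit, abs_mul, abs_of_pos hD]
    have hstep1 : |∫ s in (0:ℝ)..1, s ^ k * (1 - s) ^ l * (y' x - y' s)|
        ≤ ∫ s in (0:ℝ)..1, s ^ k * (1 - s) ^ l * (ε/4 + c*(s-x)^2) := by
      calc |∫ s in (0:ℝ)..1, s ^ k * (1 - s) ^ l * (y' x - y' s)|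
          ≤ ∫ s in (0:ℝ)..1, |s ^ k * (1 - s) ^ l * (y' x - y' s)| :=
            intervalIntegral.abs_integral_le_integral_abs (by norm_num)
        _ ≤ ∫ s in (0:ℝ)..1, s ^ k * (1 - s) ^ l * (ε/4 + c*(s-x)^2) := by
            apply intervalIntegral.integral_mono_on (by norm_num) hyInt.abs
            · exact (((cont_kernel k l).mul (by fun_prop)).intervalIntegrable 0 1)
            · intro s hs
              rw [abs_mul, abs_of_nonneg (hker s hs)]
              apply mul_le_mul_of_nonneg_left _ (hker s hs)
              rw [abs_sub_comm]
              exact hpt s hs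
    have hstep2 : (∫ s in (0:ℝ)..1, s ^ k * (1 - s) ^ l * (ε/4 + c*(s-x)^2))
        = ε/4 * ((k.factorial * l.factorial : ℝ) / (m+1).factorial)
          + c * ∫ s in (0:ℝ)..1, s ^ k * (1 - s) ^ l * (s-x)^2 := by
      rw [← I0, ← intervalIntegral.integral_const_mul, ← intervalIntegral.integral_const_mul,
        ← intervalIntegral.integral_add
          ((by fun_prop : Continuous fun s : ℝ => ε/4*(s^k*(1-s)^l)).intervalIntegrable 0 1)
          ((by fun_prop : Continuous fun s : ℝ => c*(s^k*(1-s)^l*(s-x)^2)).intervalIntegrable 0 1)]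
      apply intervalIntegral.integral_congr
      intro s _; ring
    calc D * |∫ s in (0:ℝ)..1, s ^ k * (1 - s) ^ l * (y' x - y' s)|
        ≤ D * (∫ s in (0:ℝ)..1, s ^ k * (1 - s) ^ l * (ε/4 + c*(s-x)^2)) :=
          mul_le_mul_of_nonneg_left hstep1 hD.le
      _ = ε/4 * (D * ((k.factorial * l.factorial : ℝ) / (m+1).factorial))
          + c * (D * ∫ s in (0:ℝ)..1, s ^ k * (1 - s) ^ l * (s-x)^2) := by
          rw [hstep2]; ring
      _ = ε/4 + c * (D * ∫ s in (0:ℝ)..1, s ^ k * (1 - s) ^ l * (s-x)^2) := by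
          have : D * ((k.factorial * l.factorial : ℝ) / (m+1).factorial) = 1 := by
            rw [hDdef]; field_simp
          rw [this, mul_one]
  -- bound the second moment term
  have hmom : D * (∫ s in (0:ℝ)..1, s ^ k * (1 - s) ^ l * (s-x)^2) ≤ η := by
    rw [hE2]
    have hexp : D * (((k+2).factorial * l.factorial : ℝ) / (m+3).factorial
        - 2*x*(((k+1).factorial * l.factorial : ℝ) / (m+2).factorial)
        + x^2*((k.factorial * l.factorial : ℝ) / (m+1).factorial))
        = ((k:ℝ)+1)*((k:ℝ)+2)/(((m:ℝ)+2)*((m:ℝ)+3)) - 2*x*(((k:ℝ)+1)/((m:ℝ)+2)) + x^2 := by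
      rw [hDdef, show m+3 = (m+2)+1 by omega, show m+2 = (m+1)+1 by omega,
        Nat.factorial_succ ((m+1)+1), Nat.factorial_succ (m+1),
        Nat.factorial_succ (k+1), Nat.factorial_succ k]
      push_cast
      field_simp
      ring
    rw [hexp]
    exact key_ineq (k:ℝ) (m:ℝ) x d η (by positivity) (by exact_mod_cast hkm) hmR
      h2η h1d hd (le_of_eq hd2) hpx.le
  have hfinal : c * (D * (∫ s in (0:ℝ)..1, s ^ k * (1 - s) ^ l * (s-x)^2)) ≤ ε/4 := by
    calc c * (D * _) ≤ c * η := mul_le_mul_of_nonneg_left hmom hc.le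
      _ = ε/4 := by rw [hηdef]; field_simp
  rw [hEeq]
  calc |y' x - D * J| ≤ ε/4 + c * (D * ((∫ s in (0:ℝ)..1, s ^ k * (1 - s) ^ l * (s - x)^2))) := hmain
    _ ≤ ε/4 + ε/4 := by linarith
    _ < ε := by linarith
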